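/- Let a ∈ ℝ and let (P_n) and (C_n) be sequences of real numbers satisfying the dual pivot quicksort recurrence C_n = P_n + (6/(n(n-1))) · Σ_{k=0}^{n-2} (n-k-1)·C_k for all n ≥ 2 (with C_0, C_1 arbitrary fixed reals). If P_n = a·n + O(1), i.e. there is a constant K with |P_n − a·n| ≤ K for all n ≥ 2, then C_n = (6/5)·a·n·ln n + O(n), i.e. there is a constant K' with |C_n − (6/5)·a·n·ln n| ≤ K'·n for all n ≥ 2. -/

import Mathlib

open Real Finset



lemma dpq_integral1 {m : ℝ} (hm : 1 ≤ m) :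
    ∫ x in (1:ℝ)..m, x * Real.log x = m^2 * Real.log m / 2 - m^2/4 + 1/4 := by
  have h0 : Set.uIcc (1:ℝ) m = Set.Icc 1 m := Set.uIcc_of_le hm
  have hz : Set.Icc (1:ℝ) m ⊆ {(0:ℝ)}ᶜ := by
    intro x hx; simp only [Set.mem_compl_iff, Set.mem_singleton_iff]
    intro h; rw [h] at hx; linarith [hx.1]
  have := intervalIntegral.integral_eq_sub_of_hasDerivAt
    (f := fun x : ℝ => x^2 * Real.log x / 2 - x^2/4)
    (f' := fun x : ℝ => x * Real.log x) (a := 1) (b := m)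
    (fun x hx => by
      rw [h0] at hx
      have hx0 : x ≠ 0 := by intro h; rw [h] at hx; linarith [hx.1]
      have h1 := ((hasDerivAt_pow 2 x).mul (Real.hasDerivAt_log hx0)).div_const 2
      have h2 := (hasDerivAt_pow 2 x).div_const 4
      convert h1.sub h2 using 1
      · rfl
      norm_num
      field_simp
      ring)
    (by
      apply ContinuousOn.intervalIntegrable
      rw [h0]
      exact continuousOn_id.mul (Real.continuousOn_log.mono hz))
  rw [this]
  simp [Real.log_one]



lemma dpq_integral2 {m : ℝ} (hm : 1 ≤ m) :
    ∫ x in (1:ℝ)..m, x^2 * Real.log x = m^3 * Real.log m / 3 - m^3/9 + 1/9 := by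
  have h0 : Set.uIcc (1:ℝ) m = Set.Icc 1 m := Set.uIcc_of_le hm
  have hz : Set.Icc (1:ℝ) m ⊆ {(0:ℝ)}ᶜ := by
    intro x hx; simp only [Set.mem_compl_iff, Set.mem_singleton_iff]
    intro h; rw [h] at hx; linarith [hx.1]
  have := intervalIntegral.integral_eq_sub_of_hasDerivAt
    (f := fun x : ℝ => x^3 * Real.log x / 3 - x^3/9)
    (f' := fun x : ℝ => x^2 * Real.log x) (a := 1) (b := m)
    (fun x hx => by
      rw [h0] at hx
      have hx0 : x ≠ 0 := by intro h; rw [h] at hx; linarith [hx.1]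
      have h1 := ((hasDerivAt_pow 3 x).mul (Real.hasDerivAt_log hx0)).div_const 3
      have h2 := (hasDerivAt_pow 3 x).div_const 9
      convert h1.sub h2 using 1
      · rfl
      norm_num
      field_simp
      ring)
    (by
      apply ContinuousOn.intervalIntegrable
      rw [h0]
      exact (continuousOn_id.pow 2).mul (Real.continuousOn_log.mono hz))
  rw [this]
  simp [Real.log_one]

lemma dpq_integral3 {m : ℝ} (hm : 1 ≤ m) :
    ∫ x in (1:ℝ)..m, Real.log x = m * Real.log m - m + 1 := by
  rw [integral_log]
  simp [Real.log_one]



lemma dpq_sum_split (f : ℝ → ℝ) {m : ℕ} (hm : 1 ≤ m) (h0 : f 0 = 0) :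
    ∑ k ∈ range (m+1), f k = ∑ k ∈ Finset.Ico 1 m, f k + f m := by
  rw [range_eq_Ico, Finset.sum_eq_sum_Ico_succ_bot (by omega), Finset.sum_Ico_succ_top hm]
  simp [h0]

lemma dpq_sum_upper (f : ℝ → ℝ) {m : ℕ} (hm : 1 ≤ m)
    (hmono : MonotoneOn f (Set.Icc 1 (m:ℝ))) (h0 : f 0 = 0) :
    ∑ k ∈ range (m+1), f k ≤ (∫ x in (1:ℝ)..(m:ℝ), f x) + f m := by
  rw [dpq_sum_split f hm h0]
  have hmono' : MonotoneOn f (Set.Icc ((1:ℕ):ℝ) ((m:ℕ):ℝ)) := by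
    simpa using hmono
  have := MonotoneOn.sum_le_integral_Ico hm hmono'
  simp only [Nat.cast_one] at this
  linarith

lemma dpq_sum_lower (f : ℝ → ℝ) {m : ℕ} (hm : 1 ≤ m)
    (hmono : MonotoneOn f (Set.Icc 1 (m:ℝ))) (h0 : f 0 = 0) (h1 : f 1 = 0) :
    (∫ x in (1:ℝ)..(m:ℝ), f x) ≤ ∑ k ∈ range (m+1), f k := by
  have hmono' : MonotoneOn f (Set.Icc ((1:ℕ):ℝ) ((m:ℕ):ℝ)) := by
    simpa using hmono
  have h := MonotoneOn.integral_le_sum_Ico hm hmono'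
  simp only [Nat.cast_one] at h
  refine h.trans (le_of_eq ?_)
  obtain ⟨m', rfl⟩ : ∃ m', m = m' + 1 := ⟨m - 1, by omega⟩
  rw [Finset.sum_Ico_eq_sum_range]
  rw [Finset.sum_range_succ' (fun k => f k) (m' + 1)]
  rw [Finset.sum_range_succ' (fun k => f (k + 1 : ℕ)) m']
  simp only [h0, h1, Nat.cast_one, Nat.cast_zero, Nat.cast_ofNat]
  have : m' + 1 - 1 = m' := by omega
  rw [this]
  rw [show ((0+1:ℕ):ℝ) = 1 by norm_num, h1, add_zero, add_zero]
  exact Finset.sum_congr rfl fun i _ => by rw [show 1 + i + 1 = i + 1 + 1 by omega]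



lemma dpq_mono1 (m : ℝ) : MonotoneOn (fun x : ℝ => x * Real.log x) (Set.Icc 1 m) := by
  intro x hx y hy hxy
  have h1 : (0:ℝ) < x := lt_of_lt_of_le one_pos hx.1
  exact mul_le_mul hxy (Real.log_le_log h1 hxy) (Real.log_nonneg hx.1) (by linarith [hy.1])

lemma dpq_mono2 (m : ℝ) : MonotoneOn (fun x : ℝ => x^2 * Real.log x) (Set.Icc 1 m) := by
  intro x hx y hy hxy
  have h1 : (0:ℝ) < x := lt_of_lt_of_le one_pos hx.1
  exact mul_le_mul (by nlinarith [hx.1, hy.1]) (Real.log_le_log h1 hxy)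
    (Real.log_nonneg hx.1) (by nlinarith [hy.1])

lemma dpq_mono3 (m : ℝ) : MonotoneOn (fun x : ℝ => Real.log x) (Set.Icc 1 m) := by
  intro x hx y hy hxy
  exact Real.log_le_log (lt_of_lt_of_le one_pos hx.1) hxy


set_option maxHeartbeats 1000000 in
lemma dpq_W_est {N L Lm S1 S2 : ℝ} (hN : 16 ≤ N)
    (hL1 : 1 ≤ L) (hLm0 : 0 ≤ Lm) (hLmL : Lm ≤ L) (hshift : (N-2) * (L - Lm) ≤ 2)
    (hS1l : (N-2)^2*Lm/2 - (N-2)^2/4 + 1/4 ≤ S1)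
    (hS1u : S1 ≤ (N-2)^2*Lm/2 - (N-2)^2/4 + 1/4 + (N-2)*Lm)
    (hS2l : (N-2)^3*Lm/3 - (N-2)^3/9 + 1/9 ≤ S2)
    (hS2u : S2 ≤ (N-2)^3*Lm/3 - (N-2)^3/9 + 1/9 + (N-2)^2*Lm) :
    |(N-1)*S1 - S2 - (N^2*(N-1)*L/6 - 5*N^2*(N-1)/36)| ≤ 9*N^2*L := by
  have hN0 : (0:ℝ) ≤ N := by linarith
  have hN1 : (0:ℝ) ≤ N - 1 := by linarith
  have hNsq : (0:ℝ) ≤ N^2 := sq_nonneg N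
  have hL0 : (0:ℝ) ≤ L := by linarith
  have hN256 : (256:ℝ) ≤ N^2 := by
    have := mul_le_mul hN hN (by norm_num) hN0
    rw [pow_two]; linarith
  have hNle : N ≤ N^2 := by
    have := mul_le_mul_of_nonneg_left hN (show (0:ℝ) ≤ N by linarith)
    rw [pow_two]; nlinarith [this]
  have hNL : N^2 ≤ N^2*L := by
    have := mul_le_mul_of_nonneg_left hL1 hNsq
    rw [mul_one] at this; exact this
  have hNL0 : 0 ≤ N^2*L := mul_nonneg hNsq hL0
  have hNleL : N ≤ N^2*L := le_trans hNle hNL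
  have h256L : (256:ℝ) ≤ N^2*L := le_trans hN256 hNL
  have hE : (N-1)*((N-2)^2*Lm/2 - (N-2)^2/4 + 1/4) - ((N-2)^3*Lm/3 - (N-2)^3/9 + 1/9)
      - (N^2*(N-1)*L/6 - 5*N^2*(N-1)/36)
      = ((N-2)^2*((N-2)+3)/6)*(Lm-L) - ((N^2-2)/3)*L + (4/9)*N^2 - (5/12)*N - 1/4 := by
    ring
  have hup := mul_le_mul_of_nonneg_left hS1u hN1
  have hlo := mul_le_mul_of_nonneg_left hS1l hN1
  have hb1 : (N-1)*((N-2)*Lm) ≤ N^2*L := by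
    have e : (N-1)*((N-2)*Lm) = ((N-1)*(N-2))*Lm := by ring
    have c : (N-1)*(N-2) ≤ N^2 := by rw [pow_two]; nlinarith [hN]
    rw [e]
    exact mul_le_mul c hLmL hLm0 hNsq
  have hb2 : ((N-2)^2*((N-2)+3)/6)*(Lm - L) ≤ 0 :=
    mul_nonpos_of_nonneg_of_nonpos
      (div_nonneg (mul_nonneg (sq_nonneg _) (by linarith)) (by norm_num)) (by linarith)
  have hb3 : 0 ≤ ((N^2-2)/3)*L := mul_nonneg (by linarith) hL0
  have hb4 : (4/9)*N^2 ≤ (4/9)*(N^2*L) := by linarith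
  have hb5 : -((N-2)*((N-2)+3)/3) ≤ ((N-2)^2*((N-2)+3)/6)*(Lm - L) := by
    have hc : (0:ℝ) ≤ (N-2)*((N-2)+3)/6 := by
      apply div_nonneg _ (by norm_num)
      exact mul_nonneg (by linarith) (by linarith)
    have h := mul_le_mul_of_nonneg_left hshift hc
    have key : ((N-2)^2*((N-2)+3)/6)*(Lm - L)
        = -(((N-2)*((N-2)+3)/6)*((N-2)*(L-Lm))) := by ring
    have key2 : ((N-2)*((N-2)+3)/6)*2 = (N-2)*((N-2)+3)/3 := by ring
    linarith
  have hb6 : (N-2)*((N-2)+3)/3 ≤ N^2*L := by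
    have c : (N-2)*((N-2)+3)/3 ≤ N^2 := by rw [pow_two]; nlinarith [hN]
    linarith
  have hb7 : ((N^2-2)/3)*L ≤ N^2*L :=
    mul_le_mul_of_nonneg_right (by linarith) hL0
  have hb8 : (N-2)^2*Lm ≤ N^2*L := by
    have c : (N-2)^2 ≤ N^2 := by rw [pow_two, pow_two]; nlinarith [hN]
    exact mul_le_mul c hLmL hLm0 hNsq
  rw [abs_le]
  constructor
  · linarith only [hE, hlo, hS2u, hb5, hb6, hb7, hb8, hN, hNL0, hNL, h256L, hNleL, hNsq]
  · linarith only [hE, hup, hS2l, hb1, hb2, hb3, hb4, hN, hNL0, hNL]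

lemma dpq_logsum_est {N Lm S1 S3 : ℝ} (hN : 16 ≤ N)
    (hS3l : (N-2)*Lm - (N-2) + 1 ≤ S3)
    (hS1u : S1 ≤ (N-2)^2*Lm/2 - (N-2)^2/4 + 1/4 + (N-2)*Lm) :
    (N-2)^2*Lm/2 - (3/4)*(N-2)^2 ≤ (N-1)*S3 - S1 := by
  have hN1 : (0:ℝ) ≤ N - 1 := by linarith
  have hlo := mul_le_mul_of_nonneg_left hS3l hN1
  linarith only [hlo, hS1u]

lemma dpq_step_est {N L Lm K A E0 E1 K' SL : ℝ}
    (hN : 16 ≤ N) (hL1 : 1 ≤ L) (hLm0 : 0 ≤ Lm) (hLmL : Lm ≤ L)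
    (hshift : (N-2)*(L-Lm) ≤ 2)
    (hA : 0 ≤ A) (hK'0 : 0 ≤ K') (hK' : K + E0 + E1 + 810*A ≤ 2*K')
    (hE0 : 0 ≤ E0) (hE1 : 0 ≤ E1)
    (hSL : (N-2)^2*Lm/2 - (3/4)*(N-2)^2 ≤ SL) :
    K + 90*A*L + 6/(N*(N-1)) *
      ((N-1)*E0 + (N-2)*E1 + K'*(N*(N-1)*(N-2)/6) - (180*A)*SL)
      ≤ K'*N - 180*A*L := by
  have hX : (0:ℝ) < N*(N-1) := by nlinarith
  have hX0 : (0:ℝ) ≤ N*(N-1) := le_of_lt hX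
  -- core: N*(N-1)*L ≤ 2*(N-2)^2*Lm
  have hq2 : 4*(N-2) ≤ N^2-7*N+8 := by
    nlinarith [mul_nonneg (show (0:ℝ) ≤ N-16 by linarith) (show (0:ℝ) ≤ N by linarith)]
  have hq1 : N^2-7*N+8 ≤ (N^2-7*N+8)*L := by
    have h := mul_le_mul_of_nonneg_left hL1 (show (0:ℝ) ≤ N^2-7*N+8 by nlinarith)
    rw [mul_one] at h; exact h
  have step1 : N*(N-1)*L ≤ 2*(N-2)^2*L - 4*(N-2) := by
    have e : 2*(N-2)^2*L - N*(N-1)*L = (N^2-7*N+8)*L := by ring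
    linarith only [hq1, hq2, e]
  have step3 : (2*(N-2))*((N-2)*(L-Lm)) ≤ (2*(N-2))*2 :=
    mul_le_mul_of_nonneg_left hshift (by linarith)
  have core : N*(N-1)*L ≤ 2*((N-2)^2*Lm) := by linarith only [step1, step3]
  have hcore := mul_le_mul_of_nonneg_left core (show (0:ℝ) ≤ 270*A by linarith)
  have hSL180 := mul_le_mul_of_nonneg_left hSL (show (0:ℝ) ≤ 180*A by linarith)
  have hm2X : 810*A*(N-2)^2 ≤ 810*A*(N*(N-1)) :=
    mul_le_mul_of_nonneg_left (by nlinarith) (by linarith)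
  have hKX := mul_le_mul_of_nonneg_right hK' hX0
  have hbE0 : 6*(N-1)*E0 ≤ E0*(N*(N-1)) := by
    have h := mul_le_mul_of_nonneg_right (show 6*(N-1) ≤ N*(N-1) by nlinarith) hE0
    linarith only [h]
  have hbE1 : 6*(N-2)*E1 ≤ E1*(N*(N-1)) := by
    have h := mul_le_mul_of_nonneg_right (show 6*(N-2) ≤ N*(N-1) by nlinarith) hE1
    linarith only [h]
  have key : 6*((N-1)*E0 + (N-2)*E1 + K'*(N*(N-1)*(N-2)/6) - (180*A)*SL)
      ≤ (K'*N - 180*A*L - K - 90*A*L)*(N*(N-1)) := by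
    linarith only [hcore, hSL180, hm2X, hKX, hbE0, hbE1]
  have h2 : 6/(N*(N-1)) * ((N-1)*E0 + (N-2)*E1 + K'*(N*(N-1)*(N-2)/6) - (180*A)*SL)
      ≤ K'*N - 180*A*L - K - 90*A*L := by
    rw [div_mul_eq_mul_div, div_le_iff₀ hX]
    linarith [key]
  linarith [h2]


-- new lemmas to test
lemma dpq_S1_l {m : ℕ} (hm : 1 ≤ m) :
    (m:ℝ)^2*Real.log m/2 - (m:ℝ)^2/4 + 1/4 ≤ ∑ k ∈ range (m+1), (k:ℝ)*Real.log k := by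
  have h := dpq_sum_lower (fun x => x*Real.log x) hm (dpq_mono1 _) (by simp) (by simp)
  rwa [dpq_integral1 (by exact_mod_cast hm)] at h

lemma dpq_S1_u {m : ℕ} (hm : 1 ≤ m) :
    ∑ k ∈ range (m+1), (k:ℝ)*Real.log k
      ≤ (m:ℝ)^2*Real.log m/2 - (m:ℝ)^2/4 + 1/4 + (m:ℝ)*Real.log m := by
  have h := dpq_sum_upper (fun x => x*Real.log x) hm (dpq_mono1 _) (by simp)
  rwa [dpq_integral1 (by exact_mod_cast hm)] at h

lemma dpq_S2_l {m : ℕ} (hm : 1 ≤ m) :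
    (m:ℝ)^3*Real.log m/3 - (m:ℝ)^3/9 + 1/9 ≤ ∑ k ∈ range (m+1), (k:ℝ)^2*Real.log k := by
  have h := dpq_sum_lower (fun x => x^2*Real.log x) hm (dpq_mono2 _) (by simp) (by simp)
  rwa [dpq_integral2 (by exact_mod_cast hm)] at h

lemma dpq_S2_u {m : ℕ} (hm : 1 ≤ m) :
    ∑ k ∈ range (m+1), (k:ℝ)^2*Real.log k
      ≤ (m:ℝ)^3*Real.log m/3 - (m:ℝ)^3/9 + 1/9 + (m:ℝ)^2*Real.log m := by
  have h := dpq_sum_upper (fun x => x^2*Real.log x) hm (dpq_mono2 _) (by simp)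
  rwa [dpq_integral2 (by exact_mod_cast hm)] at h

lemma dpq_S3_l {m : ℕ} (hm : 1 ≤ m) :
    (m:ℝ)*Real.log m - (m:ℝ) + 1 ≤ ∑ k ∈ range (m+1), Real.log k := by
  have h := dpq_sum_lower (fun x => Real.log x) hm (dpq_mono3 _) (by simp) (by simp)
  rwa [dpq_integral3 (by exact_mod_cast hm)] at h

lemma dpq_gauss (j : ℕ) : ∑ k ∈ Finset.range j, (k:ℝ) = (j:ℝ)*((j:ℝ)-1)/2 := by
  induction j with
  | zero => simp
  | succ j ih => rw [Finset.sum_range_succ, ih]; push_cast; ring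

lemma dpq_sum_poly (j : ℕ) :
    ∑ k ∈ Finset.range j, ((j:ℝ) - k)*k = (j:ℝ)*((j:ℝ)^2-1)/6 := by
  induction j with
  | zero => simp
  | succ j ih =>
    have h1 : ∑ k ∈ Finset.range (j+1), ((j:ℝ) - k)*k = (j:ℝ)*((j:ℝ)^2-1)/6 := by
      rw [Finset.sum_range_succ, ih]; simp
    have hsplit : ∑ k ∈ Finset.range (j+1), ((↑(j+1):ℝ) - k)*k
        = ∑ k ∈ Finset.range (j+1), (((j:ℝ) - k)*k + k) := by
      apply Finset.sum_congr rfl; intro k _; push_cast; ring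
    rw [hsplit, Finset.sum_add_distrib, h1, dpq_gauss (j+1)]
    push_cast; ring

lemma dpq_RT_est {N a W : ℝ} (hN : 16 ≤ N) {L : ℝ} (hL0 : 0 ≤ L)
    (hW : |W - (N^2*(N-1)*L/6 - 5*N^2*(N-1)/36)| ≤ 9*N^2*L) :
    |a*N + 6/(N*(N-1)) * (6/5*a*W) - 6/5*a*N*L| ≤ 90 * |a| * L := by
  have hX : (0:ℝ) < N*(N-1) := by nlinarith
  have hid : a*N + 6/(N*(N-1)) * (6/5*a*W) - 6/5*a*N*L
      = (36*a/(5*(N*(N-1)))) * (W - (N^2*(N-1)*L/6 - 5*N^2*(N-1)/36)) := by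
    have hN1' : N - 1 ≠ 0 := by linarith
    have hN0' : N ≠ 0 := by linarith
    field_simp
    ring
  rw [hid, abs_mul]
  have h1 : |36*a/(5*(N*(N-1)))| = 36*|a|/(5*(N*(N-1))) := by
    rw [abs_div, abs_mul, abs_mul]
    rw [abs_of_pos hX, abs_of_pos (show (0:ℝ) < 5 by norm_num),
      abs_of_pos (show (0:ℝ) < 36 by norm_num)]
  rw [h1]
  have h2 := mul_le_mul_of_nonneg_left hW (show (0:ℝ) ≤ 36*|a|/(5*(N*(N-1))) by positivity)
  refine h2.trans ?_
  rw [div_mul_eq_mul_div, div_le_iff₀ (by positivity : (0:ℝ) < 5*(N*(N-1)))]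
  have hcert : 0 ≤ (|a| * L)*(N*(126*N - 450)) :=
    mul_nonneg (mul_nonneg (abs_nonneg a) hL0)
      (mul_nonneg (by linarith) (by linarith))
  nlinarith [hcert]


set_option maxHeartbeats 1000000 in
/-- Solving the dual pivot quicksort recurrence: if the average partitioning cost
satisfies `P n = a·n + O(1)`, then the average sorting cost satisfies
`C n = (6/5)·a·n·ln n + O(n)`. -/
theorem dual_pivot_recurrence_bigO (a : ℝ) (P C : ℕ → ℝ)
    (hrec : ∀ n : ℕ, 2 ≤ n →
      C n = P n + 6 / ((n : ℝ) * ((n : ℝ) - 1)) *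
        ∑ k ∈ Finset.range (n - 1), (((n : ℝ) - (k : ℝ) - 1) * C k))
    (hP : ∃ K : ℝ, ∀ n : ℕ, 2 ≤ n → |P n - a * (n : ℝ)| ≤ K) :
    ∃ K' : ℝ, ∀ n : ℕ, 2 ≤ n →
      |C n - (6 / 5) * a * (n : ℝ) * Real.log n| ≤ K' * n := by
  classical
  obtain ⟨K, hK⟩ := hP
  have hK0 : 0 ≤ K := le_trans (abs_nonneg _) (hK 2 le_rfl)
  set g : ℕ → ℝ := fun k => 6/5 * a * (k:ℝ) * Real.log (k:ℝ) with hg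
  have hA0 : (0:ℝ) ≤ |a| := abs_nonneg a
  have hne : (Finset.Icc 2 16).Nonempty := ⟨2, by simp⟩
  set Kb : ℝ := (Finset.Icc 2 16).sup' hne (fun j => |C j - g j| + 180 * |a| * j) with hKb
  set K' : ℝ := max Kb ((K + |C 0 - g 0| + |C 1 - g 1| + 810 * |a|)/2) with hK'd
  have hKbK' : Kb ≤ K' := le_max_left _ _
  have hK'0 : 0 ≤ K' := by
    have h2 : |C 2 - g 2| + 180 * |a| * (2:ℕ) ≤ Kb :=
      Finset.le_sup' (f := fun j => |C j - g j| + 180 * |a| * j) (by simp)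
    have h3 : (0:ℝ) ≤ |C 2 - g 2| + 180 * |a| * (2:ℕ) := by positivity
    linarith
  have hK'cond : K + |C 0 - g 0| + |C 1 - g 1| + 810 * |a| ≤ 2*K' := by
    have := le_max_right Kb ((K + |C 0 - g 0| + |C 1 - g 1| + 810 * |a|)/2)
    rw [← hK'd] at this
    linarith
  have main : ∀ n : ℕ, 2 ≤ n → |C n - g n| ≤ K' * n - 180 * |a| * Real.log n := by
    intro n
    induction n using Nat.strong_induction_on with
    | _ n ih =>
      intro hn
      by_cases hbig : n ≤ 16
      · -- base case
        have hmem : n ∈ Finset.Icc 2 16 := Finset.mem_Icc.mpr ⟨hn, hbig⟩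
        have h1 : |C n - g n| + 180 * |a| * n ≤ Kb :=
          Finset.le_sup' (f := fun j => |C j - g j| + 180 * |a| * j) hmem
        have hn0 : (0:ℝ) < n := by positivity
        have hlog : Real.log n ≤ (n:ℝ) :=
          (Real.log_le_sub_one_of_pos hn0).trans (by linarith)
        have h2 : 180 * |a| * Real.log n ≤ 180 * |a| * n :=
          mul_le_mul_of_nonneg_left hlog (by positivity)
        have h3 : K' * 2 ≤ K' * n :=
          mul_le_mul_of_nonneg_left (by exact_mod_cast hn) hK'0
        linarith
      · -- inductive step
        push_neg at hbig
        have hN16 : (16:ℝ) ≤ (n:ℝ) := by exact_mod_cast hbig.le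
        have hN0 : (0:ℝ) < (n:ℝ) := by linarith
        have hX : (0:ℝ) < (n:ℝ) * ((n:ℝ)-1) := by nlinarith
        have hmcast : ((n-2:ℕ):ℝ) = (n:ℝ) - 2 := by
          push_cast [Nat.cast_sub (show 2 ≤ n by omega)]; ring
        have hm1 : 1 ≤ n - 2 := by omega
        have hrange : n - 1 = (n-2) + 1 := by omega
        have hL1 : 1 ≤ Real.log n := by
          rw [← Real.log_exp 1]
          apply Real.log_le_log (Real.exp_pos 1)
          have := Real.exp_one_lt_d9
          linarith
        have hL0 : (0:ℝ) ≤ Real.log n := by linarith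
        have hLm0 : 0 ≤ Real.log ((n:ℝ)-2) := Real.log_nonneg (by linarith)
        have hLmL : Real.log ((n:ℝ)-2) ≤ Real.log n :=
          Real.log_le_log (by linarith) (by linarith)
        have hshift : ((n:ℝ)-2)*(Real.log n - Real.log ((n:ℝ)-2)) ≤ 2 := by
          have hsub : Real.log (n:ℝ) - Real.log ((n:ℝ)-2) = Real.log ((n:ℝ)/((n:ℝ)-2)) := by
            rw [Real.log_div (by linarith) (by linarith)]
          have h2' : (0:ℝ) < (n:ℝ) - 2 := by linarith
          have hlt : Real.log ((n:ℝ)/((n:ℝ)-2)) ≤ (n:ℝ)/((n:ℝ)-2) - 1 :=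
            Real.log_le_sub_one_of_pos (div_pos hN0 h2')
          have he : ((n:ℝ)-2) * ((n:ℝ)/((n:ℝ)-2) - 1) = 2 := by
            field_simp
            ring
          calc ((n:ℝ)-2)*(Real.log n - Real.log ((n:ℝ)-2))
              ≤ ((n:ℝ)-2)*((n:ℝ)/((n:ℝ)-2) - 1) := by
                rw [hsub]; exact mul_le_mul_of_nonneg_left hlt (by linarith)
            _ = 2 := he
        -- sum bounds, rewritten with hmcast
        have hS1l := dpq_S1_l hm1
        have hS1u := dpq_S1_u hm1
        have hS2l := dpq_S2_l hm1
        have hS2u := dpq_S2_u hm1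
        have hS3l := dpq_S3_l hm1
        rw [hmcast] at hS1l hS1u hS2l hS2u hS3l
        have hW := dpq_W_est hN16 hL1 hLm0 hLmL hshift hS1l hS1u hS2l hS2u
        -- identities
        have hWid : ∑ k ∈ Finset.range (n-1), ((n:ℝ) - (k:ℝ) - 1) * ((k:ℝ)*Real.log (k:ℝ))
            = ((n:ℝ)-1) * (∑ k ∈ range ((n-2)+1), (k:ℝ)*Real.log k)
              - ∑ k ∈ range ((n-2)+1), (k:ℝ)^2*Real.log k := by
          rw [hrange, Finset.mul_sum, ← Finset.sum_sub_distrib]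
          apply Finset.sum_congr rfl; intro k _; ring
        have hSLid : ∑ k ∈ Finset.range (n-1), ((n:ℝ) - (k:ℝ) - 1) * Real.log (k:ℝ)
            = ((n:ℝ)-1) * (∑ k ∈ range ((n-2)+1), Real.log k)
              - ∑ k ∈ range ((n-2)+1), (k:ℝ)*Real.log k := by
          rw [hrange, Finset.mul_sum, ← Finset.sum_sub_distrib]
          apply Finset.sum_congr rfl; intro k _; ring
        have hSL : ((n:ℝ)-2)^2*Real.log ((n:ℝ)-2)/2 - (3/4)*((n:ℝ)-2)^2
            ≤ ∑ k ∈ Finset.range (n-1), ((n:ℝ) - (k:ℝ) - 1) * Real.log (k:ℝ) := by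
          rw [hSLid]; exact dpq_logsum_est hN16 hS3l hS1u
        have hPoly : ∑ k ∈ Finset.range (n-1), ((n:ℝ) - (k:ℝ) - 1) * (k:ℝ)
            = (n:ℝ)*((n:ℝ)-1)*((n:ℝ)-2)/6 := by
          have h := dpq_sum_poly (n-1)
          have hc : ((n-1:ℕ):ℝ) = (n:ℝ) - 1 := by
            push_cast [Nat.cast_sub (show 1 ≤ n by omega)]; ring
          rw [hc] at h
          calc ∑ k ∈ Finset.range (n-1), ((n:ℝ) - (k:ℝ) - 1) * (k:ℝ)
              = ∑ k ∈ Finset.range (n-1), (((n:ℝ)-1) - (k:ℝ)) * (k:ℝ) := by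
                apply Finset.sum_congr rfl; intro k _; ring
            _ = ((n:ℝ)-1)*(((n:ℝ)-1)^2-1)/6 := h
            _ = (n:ℝ)*((n:ℝ)-1)*((n:ℝ)-2)/6 := by ring
        -- split the C-sum
        have hgn : g n = 6/5*a*(n:ℝ)*Real.log (n:ℝ) := by rw [hg]
        have hCsum : ∑ k ∈ Finset.range (n-1), ((n:ℝ) - (k:ℝ) - 1) * C k
            = ∑ k ∈ Finset.range (n-1), ((n:ℝ) - (k:ℝ) - 1) * g k
              + ∑ k ∈ Finset.range (n-1), ((n:ℝ) - (k:ℝ) - 1) * (C k - g k) := by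
          rw [← Finset.sum_add_distrib]
          apply Finset.sum_congr rfl; intro k _; ring
        have hgW : ∑ k ∈ Finset.range (n-1), ((n:ℝ) - (k:ℝ) - 1) * g k
            = 6/5 * a * (((n:ℝ)-1) * (∑ k ∈ range ((n-2)+1), (k:ℝ)*Real.log k)
              - ∑ k ∈ range ((n-2)+1), (k:ℝ)^2*Real.log k) := by
          rw [← hWid, Finset.mul_sum]
          apply Finset.sum_congr rfl; intro k _
          simp only [hg]; ring
        have hRT := dpq_RT_est (a := a) hN16 hL0 hW
        -- coefficients nonneg
        have hcoef : ∀ k ∈ Finset.range (n-1), (0:ℝ) ≤ (n:ℝ) - (k:ℝ) - 1 := by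
          intro k hk
          rw [Finset.mem_range] at hk
          have hk2 : (k:ℝ) ≤ ((n-2:ℕ):ℝ) := by exact_mod_cast (show k ≤ n-2 by omega)
          rw [hmcast] at hk2
          linarith
        have habs : |∑ k ∈ Finset.range (n-1), ((n:ℝ) - (k:ℝ) - 1) * (C k - g k)|
            ≤ ∑ k ∈ Finset.range (n-1), ((n:ℝ) - (k:ℝ) - 1) * |C k - g k| := by
          refine (Finset.abs_sum_le_sum_abs _ _).trans (le_of_eq ?_)
          apply Finset.sum_congr rfl; intro k hk
          rw [abs_mul, abs_of_nonneg (hcoef k hk)]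
        have hsplit : ∀ (F : ℕ → ℝ), ∑ k ∈ Finset.range (n-1), F k
            = F 0 + (F 1 + ∑ k ∈ Finset.Ico 2 (n-1), F k) := by
          intro F
          rw [Finset.range_eq_Ico, Finset.sum_eq_sum_Ico_succ_bot (show 0 < n-1 by omega),
              Finset.sum_eq_sum_Ico_succ_bot (show 0+1 < n-1 by omega)]
        have hIco : ∑ k ∈ Finset.Ico 2 (n-1), ((n:ℝ) - (k:ℝ) - 1) * |C k - g k|
            ≤ ∑ k ∈ Finset.Ico 2 (n-1), ((n:ℝ) - (k:ℝ) - 1) * (K'*k - 180 * |a| * Real.log k) := by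
          apply Finset.sum_le_sum
          intro k hk
          rw [Finset.mem_Ico] at hk
          exact mul_le_mul_of_nonneg_left (ih k (by omega) hk.1)
            (hcoef k (Finset.mem_range.mpr (by omega)))
        have hlin : ∑ k ∈ Finset.range (n-1), ((n:ℝ) - (k:ℝ) - 1) * (K'*k - 180 * |a| * Real.log k)
            = K' * ((n:ℝ)*((n:ℝ)-1)*((n:ℝ)-2)/6)
              - 180 * |a| * ∑ k ∈ Finset.range (n-1), ((n:ℝ) - (k:ℝ) - 1) * Real.log (k:ℝ) := by
          rw [← hPoly, Finset.mul_sum, Finset.mul_sum, ← Finset.sum_sub_distrib]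
          apply Finset.sum_congr rfl; intro k _; ring
        have hsum_bound : ∑ k ∈ Finset.range (n-1), ((n:ℝ) - (k:ℝ) - 1) * |C k - g k|
            ≤ ((n:ℝ)-1) * |C 0 - g 0| + ((n:ℝ)-2) * |C 1 - g 1|
              + K' * ((n:ℝ)*((n:ℝ)-1)*((n:ℝ)-2)/6)
                - (180 * |a|) * ∑ k ∈ Finset.range (n-1), ((n:ℝ) - (k:ℝ) - 1) * Real.log (k:ℝ) := by
          have e1 := hsplit (fun k => ((n:ℝ) - (k:ℝ) - 1) * |C k - g k|)
          have e2 := hsplit (fun k => ((n:ℝ) - (k:ℝ) - 1) * (K'*k - 180 * |a| * Real.log k))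
          simp only [Nat.cast_zero, Nat.cast_one, Real.log_zero, Real.log_one,
            Nat.cast_ofNat, mul_zero, sub_zero, mul_one] at e1 e2
          rw [e2] at hlin
          have hK'term : (0:ℝ) ≤ ((n:ℝ) - 1 - 1) * (K' * 1 - 180 * |a| * 0) := by
            rw [mul_zero, sub_zero, mul_one]
            exact mul_nonneg (by linarith) hK'0
          -- combine
          rw [e1]
          nlinarith [hIco, hlin, hK'term]
        -- master identity
        have hrec' := hrec n hn
        have hid : C n - g n = (P n - a*(n:ℝ))
            + (a*(n:ℝ) + 6/((n:ℝ)*((n:ℝ)-1)) * (6/5*a*(((n:ℝ)-1) * (∑ k ∈ range ((n-2)+1), (k:ℝ)*Real.log k)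
              - ∑ k ∈ range ((n-2)+1), (k:ℝ)^2*Real.log k)) - 6/5*a*(n:ℝ)*Real.log (n:ℝ))
            + 6/((n:ℝ)*((n:ℝ)-1)) * (∑ k ∈ Finset.range (n-1), ((n:ℝ) - (k:ℝ) - 1) * (C k - g k)) := by
          rw [hgn, hrec', hCsum, hgW]
          ring
        have habs2 : |C n - g n| ≤ K + 90 * |a| * Real.log n
            + 6/((n:ℝ)*((n:ℝ)-1)) *
              (((n:ℝ)-1) * |C 0 - g 0| + ((n:ℝ)-2) * |C 1 - g 1|
                + K' * ((n:ℝ)*((n:ℝ)-1)*((n:ℝ)-2)/6)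
                  - (180 * |a|) * ∑ k ∈ Finset.range (n-1), ((n:ℝ) - (k:ℝ) - 1) * Real.log (k:ℝ)) := by
          rw [hid]
          have t1 := abs_add_le ((P n - a*(n:ℝ))
            + (a*(n:ℝ) + 6/((n:ℝ)*((n:ℝ)-1)) * (6/5*a*(((n:ℝ)-1) * (∑ k ∈ range ((n-2)+1), (k:ℝ)*Real.log k)
              - ∑ k ∈ range ((n-2)+1), (k:ℝ)^2*Real.log k)) - 6/5*a*(n:ℝ)*Real.log (n:ℝ)))
            (6/((n:ℝ)*((n:ℝ)-1)) * (∑ k ∈ Finset.range (n-1), ((n:ℝ) - (k:ℝ) - 1) * (C k - g k)))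
          have t2 := abs_add_le (P n - a*(n:ℝ))
            (a*(n:ℝ) + 6/((n:ℝ)*((n:ℝ)-1)) * (6/5*a*(((n:ℝ)-1) * (∑ k ∈ range ((n-2)+1), (k:ℝ)*Real.log k)
              - ∑ k ∈ range ((n-2)+1), (k:ℝ)^2*Real.log k)) - 6/5*a*(n:ℝ)*Real.log (n:ℝ))
          have t3 : |6/((n:ℝ)*((n:ℝ)-1)) * (∑ k ∈ Finset.range (n-1), ((n:ℝ) - (k:ℝ) - 1) * (C k - g k))|
              = 6/((n:ℝ)*((n:ℝ)-1)) * |∑ k ∈ Finset.range (n-1), ((n:ℝ) - (k:ℝ) - 1) * (C k - g k)| := by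
            rw [abs_mul, abs_of_pos (show (0:ℝ) < 6/((n:ℝ)*((n:ℝ)-1)) by positivity)]
          have t4 := mul_le_mul_of_nonneg_left (habs.trans hsum_bound)
            (show (0:ℝ) ≤ 6/((n:ℝ)*((n:ℝ)-1)) by positivity)
          have t5 := hK n hn
          rw [t3] at t1
          linarith [hRT]
        have hstep := dpq_step_est (K := K) (A := |a|) (E0 := |C 0 - g 0|) (E1 := |C 1 - g 1|)
          (K' := K') (SL := ∑ k ∈ Finset.range (n-1), ((n:ℝ) - (k:ℝ) - 1) * Real.log (k:ℝ))
          hN16 hL1 hLm0 hLmL hshift hA0 hK'0 hK'cond (abs_nonneg _) (abs_nonneg _) hSL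
        calc |C n - g n| ≤ _ := habs2
          _ ≤ K'*(n:ℝ) - 180 * |a| * Real.log n := hstep
  refine ⟨K', fun n hn => ?_⟩
  have h := main n hn
  have hgn : g n = 6/5*a*(n:ℝ)*Real.log (n:ℝ) := by rw [hg]
  have hlog : 0 ≤ Real.log n := Real.log_nonneg (by exact_mod_cast le_trans (by norm_num) hn)
  have : 0 ≤ 180 * |a| * Real.log n := by positivity
  rw [← hgn]
  linarith
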